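/- For every k ≥ 2, the element ab[a,b]^k b^{k-2} of the free group F(a,b) is not quasi-positive. -/

import Mathlib

/-- Quasi-positive: a (possibly empty) product of conjugates of generators. -/
def QuasiPositive {X : Type*} (w : FreeGroup X) : Prop :=
  ∃ l : List (X × FreeGroup X),
    w = (l.map fun p => p.2⁻¹ * FreeGroup.of p.1 * p.2).prod

/-- The generator `a` of the free group on two generators. -/
def a : FreeGroup Bool := FreeGroup.of true

/-- The generator `b` of the free group on two generators. -/
def b : FreeGroup Bool := FreeGroup.of false

noncomputable section QPAux

namespace QPAux

/-! ### Two piecewise-linear homeomorphisms of ℝ commuting with translation by 1 -/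

def gB (x : ℝ) : ℝ := min (5*x/2 + 1/2) (4/3 - 5*x/6)
def fB (x : ℝ) : ℝ := max (1/4 - 3*x/4) (3*x/4 - 1/2)
def Gf (x : ℝ) : ℝ := x + gB (Int.fract x)
def Ff (x : ℝ) : ℝ := x + fB (Int.fract x)

lemma Gf_add_one (x : ℝ) : Gf (x + 1) = Gf x + 1 := by
  simp [Gf, Int.fract_add_one]; ring
lemma Ff_add_one (x : ℝ) : Ff (x + 1) = Ff x + 1 := by
  simp [Ff, Int.fract_add_one]; ring

lemma Gf_ge (x : ℝ) : x ≤ Gf x := by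
  have h0 := Int.fract_nonneg x
  have h1 := Int.fract_lt_one x
  have : (0:ℝ) ≤ gB (Int.fract x) := le_min (by linarith) (by linarith)
  simp [Gf]; linarith
lemma Gf_le (x : ℝ) : Gf x ≤ x + 3/2 := by
  have h0 := Int.fract_nonneg x
  have : gB (Int.fract x) ≤ 3/2 := (min_le_right _ _).trans (by linarith)
  simp [Gf]; linarith
lemma Ff_ge (x : ℝ) : x - 1 ≤ Ff x := by
  have h0 := Int.fract_nonneg x
  have h1 := Int.fract_lt_one x
  have : (-1:ℝ) ≤ fB (Int.fract x) := le_trans (by linarith) (le_max_left _ _)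
  simp [Ff]; linarith
lemma Ff_le (x : ℝ) : Ff x ≤ x + 1/4 := by
  have h0 := Int.fract_nonneg x
  have h1 := Int.fract_lt_one x
  have : fB (Int.fract x) ≤ 1/4 := max_le (by linarith) (by linarith)
  simp [Ff]; linarith

lemma continuous_Gf : Continuous Gf := by
  have h : Continuous (fun x : ℝ => gB x) := by unfold gB; fun_prop
  have h2 : Continuous (gB ∘ Int.fract) :=
    ContinuousOn.comp_fract'' h.continuousOn (by norm_num [gB])
  exact continuous_id.add h2
lemma continuous_Ff : Continuous Ff := by
  have h : Continuous (fun x : ℝ => fB x) := by unfold fB; fun_prop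
  have h2 : Continuous (fB ∘ Int.fract) :=
    ContinuousOn.comp_fract'' h.continuousOn (by norm_num [fB])
  exact continuous_id.add h2

/-- integer translation from the unit-translation property -/
lemma add_int {f : ℝ → ℝ} (hf : ∀ x, f (x + 1) = f x + 1) (x : ℝ) (n : ℤ) :
    f (x + n) = f x + n := by
  induction n using Int.induction_on with
  | zero => simp
  | succ m ih =>
      have h1 : f (x + ((m:ℤ):ℝ) + 1) = f (x + ((m:ℤ):ℝ)) + 1 := hf _
      push_cast at ih h1 ⊢
      rw [show x + ((m:ℝ) + 1) = x + (m:ℝ) + 1 by ring, h1, ih]; ring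
  | pred m ih =>
      push_cast at ih ⊢
      have := hf (x + (-(m:ℝ) - 1))
      rw [show x + (-(m:ℝ) - 1) + 1 = x + -(m:ℝ) by ring] at this
      have goal : f (x + (-(m:ℝ) - 1)) = f x + (-(m:ℝ) - 1) := by linarith [ih, this]
      calc f (x + (-(m:ℝ) + -1)) = f (x + (-(m:ℝ) - 1)) := by ring_nf
        _ = f x + (-(m:ℝ) + -1) := by rw [goal]; ring

lemma strictMono_of_unit {f : ℝ → ℝ} (hper : ∀ x, f (x + 1) = f x + 1)
    (h01 : StrictMonoOn f (Set.Icc 0 1)) : StrictMono f := by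
  have hint := add_int hper
  intro x y hxy
  set n := ⌊x⌋ with hn
  have hx0 : (0:ℝ) ≤ x - n := by linarith [Int.floor_le x]
  have hx1 : x - n < 1 := by linarith [Int.lt_floor_add_one x]
  have hfx : f x = f (x - n) + n := by
    have := hint (x - n) n; rw [sub_add_cancel] at this; linarith
  rcases le_or_gt (y - n) 1 with hcase | hcase
  · have hy0 : (0:ℝ) ≤ y - n := by linarith
    have : f (x - n) < f (y - n) :=
      h01 ⟨hx0, by linarith⟩ ⟨hy0, hcase⟩ (by linarith)
    have hfy : f y = f (y - n) + n := by
      have := hint (y - n) n; rw [sub_add_cancel] at this; linarith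
    rw [hfx, hfy]; linarith
  · set m := ⌊y⌋ with hm
    have hym0 : (0:ℝ) ≤ y - m := by linarith [Int.floor_le y]
    have hym1 : y - m < 1 := by linarith [Int.lt_floor_add_one y]
    have hnm : (n:ℝ) + 1 ≤ m := by
      have : (n:ℤ) + 1 ≤ m := by
        apply Int.le_floor.2; push_cast; linarith
      exact_mod_cast this
    have h1 : f (x - n) < f 1 := h01 ⟨hx0, by linarith⟩ (by norm_num) (by linarith)
    have hf1 : f 1 = f 0 + 1 := by simpa using hper 0
    have h2 : f 0 ≤ f (y - m) := by
      rcases eq_or_lt_of_le hym0 with h | h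
      · rw [← h]
      · exact le_of_lt (h01 (by norm_num) ⟨hym0, le_of_lt hym1⟩ h)
    have hfy : f y = f (y - m) + m := by
      have := hint (y - m) m; rw [sub_add_cancel] at this; linarith
    rw [hfx, hfy]
    linarith

lemma Gf_eq_on_unit {x : ℝ} (h0 : 0 ≤ x) (h1 : x ≤ 1) :
    Gf x = min (7*x/2 + 1/2) (x/6 + 4/3) := by
  rcases eq_or_lt_of_le h1 with h | h
  · subst h
    have h2 : Int.fract (1:ℝ) = 0 := Int.fract_one
    rw [Gf, gB, h2]; norm_num
  · have hf : Int.fract x = x := Int.fract_eq_self.2 ⟨h0, h⟩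
    rw [Gf, gB, hf]
    rcases le_total (5*x/2 + 1/2) (4/3 - 5*x/6) with hc | hc
    · rw [min_eq_left hc, min_eq_left (by linarith)]; ring
    · rw [min_eq_right hc, min_eq_right (by linarith)]; ring

lemma Ff_eq_on_unit {x : ℝ} (h0 : 0 ≤ x) (h1 : x ≤ 1) :
    Ff x = max (x/4 + 1/4) (7*x/4 - 1/2) := by
  rcases eq_or_lt_of_le h1 with h | h
  · subst h
    have h2 : Int.fract (1:ℝ) = 0 := Int.fract_one
    rw [Ff, fB, h2]; norm_num
  · have hf : Int.fract x = x := Int.fract_eq_self.2 ⟨h0, h⟩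
    rw [Ff, fB, hf]
    rcases le_total (1/4 - 3*x/4) (3*x/4 - 1/2) with hc | hc
    · rw [max_eq_right hc, max_eq_right (by linarith)]; ring
    · rw [max_eq_left hc, max_eq_left (by linarith)]; ring

lemma strictMono_Gf : StrictMono Gf := by
  apply strictMono_of_unit Gf_add_one
  intro x hx y hy hxy
  rw [Gf_eq_on_unit hx.1 hx.2, Gf_eq_on_unit hy.1 hy.2]
  exact lt_min ((min_le_left _ _).trans_lt (by linarith))
    ((min_le_right _ _).trans_lt (by linarith))

lemma strictMono_Ff : StrictMono Ff := by
  apply strictMono_of_unit Ff_add_one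
  intro x hx y hy hxy
  rw [Ff_eq_on_unit hx.1 hx.2, Ff_eq_on_unit hy.1 hy.2]
  exact max_lt ((by linarith : x/4 + 1/4 < y/4 + 1/4).trans_le (le_max_left _ _))
    ((by linarith : 7*x/4 - 1/2 < 7*y/4 - 1/2).trans_le (le_max_right _ _))

lemma surjective_Gf : Function.Surjective Gf := by
  intro y
  have h1 : Gf (y - 2) ≤ y := by linarith [Gf_le (y - 2)]
  have h2 : y ≤ Gf y := Gf_ge y
  have := intermediate_value_Icc (by linarith : y - 2 ≤ y) continuous_Gf.continuousOn
  obtain ⟨x, _, hx⟩ := this ⟨h1, h2⟩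
  exact ⟨x, hx⟩

lemma surjective_Ff : Function.Surjective Ff := by
  intro y
  have h1 : Ff (y - 2) ≤ y := by linarith [Ff_le (y - 2)]
  have h2 : y ≤ Ff (y + 1) := by linarith [Ff_ge (y + 1)]
  have := intermediate_value_Icc (by linarith : y - 2 ≤ y + 1) continuous_Ff.continuousOn
  obtain ⟨x, _, hx⟩ := this ⟨h1, h2⟩
  exact ⟨x, hx⟩

/-- the permutations -/
def Ge : Equiv.Perm ℝ := Equiv.ofBijective Gf ⟨strictMono_Gf.injective, surjective_Gf⟩
def Fe : Equiv.Perm ℝ := Equiv.ofBijective Ff ⟨strictMono_Ff.injective, surjective_Ff⟩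

@[simp] lemma Ge_apply (x : ℝ) : Ge x = Gf x := rfl
@[simp] lemma Fe_apply (x : ℝ) : Fe x = Ff x := rfl

/-- values -/
lemma Gf_zero : Gf 0 = 1/2 := by rw [Gf, gB, Int.fract_zero]; norm_num
lemma Gf_one : Gf 1 = 3/2 := by rw [Gf, gB, Int.fract_one]; norm_num
lemma fract_neg34 : Int.fract (-3/4 : ℝ) = 1/4 := by
  have h : (-3/4 : ℝ) = 1/4 + ((-1 : ℤ) : ℝ) := by norm_num
  rw [h, Int.fract_add_intCast]
  exact Int.fract_eq_self.2 (by norm_num)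
lemma Gf_neg34 : Gf (-3/4) = 3/8 := by rw [Gf, gB, fract_neg34]; norm_num
lemma fract_neg1 : Int.fract (-1 : ℝ) = 0 := by
  have h : (-1 : ℝ) = 0 + ((-1 : ℤ) : ℝ) := by norm_num
  rw [h, Int.fract_add_intCast, Int.fract_zero]
lemma Ff_half : Ff (1/2) = 3/8 := by
  rw [Ff, fB, Int.fract_eq_self.2 (by norm_num : (0:ℝ) ≤ 1/2 ∧ (1/2:ℝ) < 1)]; norm_num
lemma Ff_neg1 : Ff (-1) = -3/4 := by rw [Ff, fB, fract_neg1]; norm_num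

/-! ### The subgroup of translation-commuting monotone permutations -/

def S : Subgroup (Equiv.Perm ℝ) where
  carrier := {e | StrictMono ⇑e ∧ ∀ x, e (x + 1) = e x + 1}
  one_mem' := ⟨fun _ _ h => h, fun x => rfl⟩
  mul_mem' := by
    rintro e f ⟨he1, he2⟩ ⟨hf1, hf2⟩
    refine ⟨fun x y h => ?_, fun x => ?_⟩
    · simpa [Equiv.Perm.mul_apply] using he1 (hf1 h)
    · simp [Equiv.Perm.mul_apply, hf2, he2]
  inv_mem' := by
    rintro e ⟨he1, he2⟩
    refine ⟨fun x y h => ?_, fun x => ?_⟩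
    · by_contra hle
      push_neg at hle
      have := he1.monotone (show (e⁻¹ : Equiv.Perm ℝ) y ≤ e⁻¹ x from hle)
      simp only [Equiv.Perm.coe_inv, Equiv.apply_symm_apply] at this
      exact absurd this (not_le.2 h)
    · apply he1.injective
      rw [Equiv.Perm.coe_inv, Equiv.apply_symm_apply, he2, Equiv.apply_symm_apply]

lemma Ge_mem : Ge ∈ S := ⟨strictMono_Gf, Gf_add_one⟩
lemma Fe_mem : Fe ∈ S := ⟨strictMono_Ff, Ff_add_one⟩

/-- the action of the free group -/
def φ : FreeGroup Bool →* Equiv.Perm ℝ :=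
  FreeGroup.lift (fun t => if t then Fe else Ge)

lemma φ_a : φ a = Fe := by simp [φ, a, FreeGroup.lift_apply_of]
lemma φ_b : φ b = Ge := by simp [φ, b, FreeGroup.lift_apply_of]

lemma φ_mem (w : FreeGroup Bool) : φ w ∈ S := by
  induction w using FreeGroup.induction_on with
  | C1 => simpa using S.one_mem
  | of t =>
      have : φ (FreeGroup.of t) = if t then Fe else Ge := FreeGroup.lift_apply_of
      rw [this]
      cases t <;> simp [Ge_mem, Fe_mem]
  | inv_of t ih => rw [map_inv]; exact S.inv_mem ih
  | mul u v hu hv => rw [map_mul]; exact S.mul_mem hu hv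

/-- the basic quasipositivity estimate: a conjugate of a generator moves points
down by at most the `a`-weight of the generator. -/
lemma factor_bound (t : Bool) (v : FreeGroup Bool) (x : ℝ) :
    x - (if t then (1:ℝ) else 0) ≤ φ (v⁻¹ * FreeGroup.of t * v) x := by
  obtain ⟨hm, hc⟩ := φ_mem v⁻¹
  have key : ∀ y : ℝ, φ v⁻¹ ((φ v) x + y - 1) ≤ φ (v⁻¹ * FreeGroup.of t * v) x →
      True := fun _ _ => trivial
  clear key
  have hof : φ (FreeGroup.of t) = if t then Fe else Ge := FreeGroup.lift_apply_of
  have expand : φ (v⁻¹ * FreeGroup.of t * v) x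
      = φ v⁻¹ (φ (FreeGroup.of t) (φ v x)) := by
    rw [map_mul, map_mul, Equiv.Perm.mul_apply, Equiv.Perm.mul_apply]
  set y := φ v x with hy
  have hsub : ∀ z : ℝ, φ v⁻¹ (z - 1) = φ v⁻¹ z - 1 := by
    intro z
    have := hc (z - 1)
    rw [sub_add_cancel] at this
    linarith
  have hx : φ v⁻¹ y = x := by
    rw [hy, map_inv]
    exact Equiv.symm_apply_apply _ _
  cases t with
  | false =>
      have hof' : φ (FreeGroup.of false) = Ge := by rw [hof]; simp
      rw [expand, hof']
      have h1 : y ≤ Ge y := Gf_ge y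
      have h2 := hm.monotone h1
      rw [hx] at h2
      simpa using h2
  | true =>
      have hof' : φ (FreeGroup.of true) = Fe := by rw [hof]; simp
      rw [expand, hof']
      have h1 : y - 1 ≤ Fe y := Ff_ge y
      have h2 := hm.monotone h1
      rw [hsub y, hx] at h2
      simpa using h2

lemma prod_bound (l : List (Bool × FreeGroup Bool)) (x : ℝ) :
    x - ((l.map fun p => if p.1 then (1:ℝ) else 0).sum)
      ≤ φ ((l.map fun p => p.2⁻¹ * FreeGroup.of p.1 * p.2).prod) x := by
  induction l generalizing x with
  | nil => simp
  | cons p l ih =>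
      simp only [List.map_cons, List.prod_cons, List.sum_cons]
      rw [map_mul, Equiv.Perm.mul_apply]
      have h1 := ih x
      have h2 := factor_bound p.1 p.2
        (φ ((l.map fun p => p.2⁻¹ * FreeGroup.of p.1 * p.2).prod) x)
      rcases Bool.eq_false_or_eq_true p.1 with hb | hb <;>
        simp only [hb, Bool.false_eq_true, if_false, if_true, eq_self_iff_true,
          sub_zero, zero_add, ite_true, ite_false] at h2 ⊢
      · have h4 := le_trans (sub_le_sub_right h1 (1:ℝ)) h2
        refine le_trans (le_of_eq ?_) h4; ring
      · exact le_trans h1 h2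

/-! ### the exponent-sum homomorphism -/

def ε : FreeGroup Bool →* Multiplicative ℝ :=
  FreeGroup.lift (fun t => Multiplicative.ofAdd (if t then (1:ℝ) else 0))

lemma ε_prod (l : List (Bool × FreeGroup Bool)) :
    ε ((l.map fun p => p.2⁻¹ * FreeGroup.of p.1 * p.2).prod)
      = Multiplicative.ofAdd ((l.map fun p => if p.1 then (1:ℝ) else 0).sum) := by
  induction l with
  | nil => simp
  | cons p l ih =>
      simp only [List.map_cons, List.prod_cons, List.sum_cons, map_mul, map_inv, ih]
      have hof : ε (FreeGroup.of p.1) = Multiplicative.ofAdd (if p.1 then (1:ℝ) else 0) :=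
        FreeGroup.lift_apply_of
      rw [hof]
      rw [show (ε p.2)⁻¹ * Multiplicative.ofAdd (if p.1 then (1:ℝ) else 0) * ε p.2
          = Multiplicative.ofAdd (if p.1 then (1:ℝ) else 0) by
        rw [mul_assoc, mul_comm _ (ε p.2), inv_mul_cancel_left]]
      rw [← ofAdd_add]

end QPAux

end QPAux
theorem ab_commutator_k_b_k_sub_two_not_quasiPositive :
    ∀ k : ℕ, 2 ≤ k →
      ¬ QuasiPositive (a * b * (a⁻¹ * b⁻¹ * a * b) ^ k * b ^ (k - 2)) := by
  intro k hk hqp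
  obtain ⟨l, hl⟩ := hqp
  -- exponent sum of `a` is 1, hence the total cost of the factors is 1
  have ha : QPAux.ε a = Multiplicative.ofAdd (1:ℝ) := by
    simp [QPAux.ε, a, FreeGroup.lift_apply_of]
  have hb : QPAux.ε b = 1 := by
    simp [QPAux.ε, b, FreeGroup.lift_apply_of]
  have h1 : QPAux.ε (a * b * (a⁻¹ * b⁻¹ * a * b) ^ k * b ^ (k - 2))
      = Multiplicative.ofAdd (1:ℝ) := by
    rw [map_mul, map_mul, map_mul, map_pow, map_mul, map_mul, map_mul,
      map_inv, map_inv, map_pow, ha, hb]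
    simp
  rw [hl, QPAux.ε_prod] at h1
  have hsum : ((l.map fun p => if p.1 then (1:ℝ) else 0).sum) = 1 :=
    Multiplicative.ofAdd.injective h1
  -- the commutator permutation
  set Cp : Equiv.Perm ℝ := QPAux.φ (a⁻¹ * b⁻¹ * a * b) with hCp
  have hCpS : Cp ∈ QPAux.S := QPAux.φ_mem _
  have hGinv : (QPAux.Ge⁻¹ : Equiv.Perm ℝ) (3/8 : ℝ) = -3/4 := by
    rw [show (QPAux.Ge⁻¹ : Equiv.Perm ℝ) = QPAux.Ge.symm from rfl,
      Equiv.symm_apply_eq, QPAux.Ge_apply, QPAux.Gf_neg34]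
  have hFinv : (QPAux.Fe⁻¹ : Equiv.Perm ℝ) (-3/4 : ℝ) = -1 := by
    rw [show (QPAux.Fe⁻¹ : Equiv.Perm ℝ) = QPAux.Fe.symm from rfl,
      Equiv.symm_apply_eq, QPAux.Fe_apply, QPAux.Ff_neg1]
  have hC0 : Cp 0 = -1 := by
    rw [hCp, map_mul, map_mul, map_mul, map_inv, map_inv, QPAux.φ_a, QPAux.φ_b]
    simp only [Equiv.Perm.mul_apply]
    rw [QPAux.Ge_apply, QPAux.Gf_zero, QPAux.Fe_apply, QPAux.Ff_half, hGinv, hFinv]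
  -- iterates of the commutator at 0
  have hCk : ∀ j : ℕ, (Cp ^ j) 0 = -(j:ℝ) := by
    intro j
    induction j with
    | zero => simp
    | succ j ih =>
        rw [pow_succ', Equiv.Perm.mul_apply, ih]
        have := QPAux.add_int hCpS.2 0 (-(j:ℤ))
        push_cast at this
        rw [show (-(j:ℝ)) = 0 + (-(j:ℝ)) by ring, this, hC0]
        push_cast
        ring
  -- the drift estimate for G
  have hGm : ∀ m : ℕ, (QPAux.Ge ^ m) (3/8 : ℝ) < m + 1 := by
    intro m
    induction m with
    | zero => norm_num
    | succ m ih =>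
        have hmem := QPAux.S.pow_mem QPAux.Ge_mem m
        rw [pow_succ', Equiv.Perm.mul_apply]
        have h2 : QPAux.Ge ((QPAux.Ge ^ m) (3/8 : ℝ)) < QPAux.Ge ((m:ℝ) + 1) := by
          exact QPAux.strictMono_Gf ih
        have h3 : QPAux.Ge ((m:ℝ) + 1) = QPAux.Gf 1 + m := by
          have := QPAux.add_int QPAux.Gf_add_one 1 (m:ℤ)
          push_cast at this
          rw [QPAux.Ge_apply, show (m:ℝ) + 1 = 1 + (m:ℝ) by ring, this]
        rw [h3, QPAux.Gf_one] at h2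
        have hc : ((m+1:ℕ):ℝ) = (m:ℝ) + 1 := by push_cast; ring
        rw [hc]
        linarith
  -- the point x0
  set x0 : ℝ := ((QPAux.Ge ^ (k-2))⁻¹ : Equiv.Perm ℝ) 0 with hx0def
  have hx0 : (QPAux.Ge ^ (k-2)) x0 = 0 := Equiv.apply_symm_apply _ _
  have hmemk := QPAux.S.pow_mem QPAux.Ge_mem (k-2)
  have hcast2 : ((k-2:ℕ):ℝ) = (k:ℝ) - 2 := by
    push_cast [Nat.cast_sub hk]; ring
  have hcast1 : ((k-1:ℕ):ℝ) = (k:ℝ) - 1 := by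
    push_cast [Nat.cast_sub (by omega : 1 ≤ k)]; ring
  have hneg : (QPAux.Ge ^ (k-2)) ((3:ℝ)/8 - ((k:ℝ) - 1)) < 0 := by
    have := QPAux.add_int hmemk.2 (3/8 : ℝ) (-((k:ℤ) - 1))
    have h5 := hGm (k-2)
    rw [hcast2] at h5
    have heq : (3:ℝ)/8 - ((k:ℝ) - 1) = 3/8 + ((-((k:ℤ) - 1)) : ℤ) := by push_cast; ring
    rw [heq, this]
    have hc : ((-((k:ℤ) - 1)) : ℤ) = -((k:ℤ)-1) := rfl
    have hc2 : (((-((k:ℤ) - 1)) : ℤ) : ℝ) = -((k:ℝ)-1) := by push_cast; ring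
    rw [hc2]
    linarith
  have hx0gt : (3:ℝ)/8 - ((k:ℝ) - 1) < x0 := by
    have := hmemk.1.lt_iff_lt (a := (3:ℝ)/8 - ((k:ℝ) - 1)) (b := x0)
    apply this.1
    rw [hx0]
    exact hneg
  -- the value of the word at x0
  have hval : QPAux.φ (a * b * (a⁻¹ * b⁻¹ * a * b) ^ k * b ^ (k - 2)) x0
      = 3/8 - (k:ℝ) := by
    rw [map_mul, map_mul, map_mul, map_pow, map_pow, QPAux.φ_a, QPAux.φ_b, ← hCp]
    simp only [Equiv.Perm.mul_apply]
    rw [hx0, hCk k]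
    have hG : QPAux.Ge (-(k:ℝ)) = 1/2 - k := by
      have := QPAux.add_int QPAux.Gf_add_one 0 (-(k:ℤ))
      push_cast at this
      rw [QPAux.Ge_apply, show (-(k:ℝ)) = 0 + -(k:ℝ) by ring, this, QPAux.Gf_zero]
      ring
    rw [hG]
    have hF : QPAux.Fe ((1:ℝ)/2 - k) = 3/8 - k := by
      have := QPAux.add_int QPAux.Ff_add_one (1/2 : ℝ) (-(k:ℤ))
      push_cast at this
      rw [QPAux.Fe_apply, show (1:ℝ)/2 - (k:ℝ) = 1/2 + -(k:ℝ) by ring, this, QPAux.Ff_half]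
      ring
    rw [hF]
  -- contradiction with the quasipositivity bound
  have hbound := QPAux.prod_bound l x0
  rw [← hl, hval, hsum] at hbound
  linarith
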